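/- Let Ω be the probability space of random Cantor sets E^ω ⊆ [0,1]² obtained by iteratively subdividing each surviving square into 4 congruent subsquares and uniformly at random deleting one, with natural limit measure μ^ω giving each of the 3^n squares of generation n mass 3^{−n}. If F ⊆ [0,1]² has Lebesgue measure zero, then almost surely μ^ω(F) = 0. -/

import Mathlib

open MeasureTheory Filter
open scoped ENNReal BoundedContinuousFunction

noncomputable section

/-- The offset of quadrant `a` of the unit square. -/
def quadOffset : Fin 4 → ℝ × ℝ
  | 0 => (0, 0)
  | 1 => (1 / 2, 0)
  | 2 => (0, 1 / 2)
  | 3 => (1 / 2, 1 / 2)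

/-- The lower-left corner of the dyadic square addressed by the word `w`
(the head of `w` is the coarsest subdivision step). -/
def sqCorner : List (Fin 4) → ℝ × ℝ
  | [] => (0, 0)
  | a :: w => ((quadOffset a).1 + (sqCorner w).1 / 2, (quadOffset a).2 + (sqCorner w).2 / 2)

/-- The closed dyadic square of side `2^{-|w|}` addressed by the word `w`. -/
def dyadicSquare (w : List (Fin 4)) : Set (ℝ × ℝ) :=
  Set.Icc (sqCorner w).1 ((sqCorner w).1 + (1 / 2) ^ w.length) ×ˢ
    Set.Icc (sqCorner w).2 ((sqCorner w).2 + (1 / 2) ^ w.length)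

/-- Given the random deletion data `ω` (assigning to each square the index of its deleted
child), the square addressed by `w` survives iff at every subdivision step the chosen
quadrant differs from the deleted one. -/
def survives (ω : List (Fin 4) → Fin 4) (w : List (Fin 4)) : Prop :=
  ∀ u : List (Fin 4), ∀ a : Fin 4, (u ++ [a]) <+: w → a ≠ ω u

/-- The union `E_n^ω` of the `3^n` surviving squares of generation `n`. -/
def genSet (ω : List (Fin 4) → Fin 4) (n : ℕ) : Set (ℝ × ℝ) :=
  ⋃ w ∈ {w : List (Fin 4) | w.length = n ∧ survives ω w}, dyadicSquare w

/-- The approximating measure `μ_n^ω = (4/3)^n · Leb|_{E_n^ω}`. -/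
def approxMeasure (ω : List (Fin 4) → Fin 4) (n : ℕ) : Measure (ℝ × ℝ) :=
  ((4 / 3 : ℝ≥0∞)) ^ n • volume.restrict (genSet ω n)

/-! ### Auxiliary material -/

attribute [local instance] Classical.propDecidable
set_option linter.unusedSectionVars false
set_option linter.deprecated false

namespace RandomCantorAux

/-! #### Geometry of dyadic squares -/

/-- The half-open version of the dyadic square. -/
def ioSq (w : List (Fin 4)) : Set (ℝ × ℝ) :=
  Set.Ico (sqCorner w).1 ((sqCorner w).1 + (1 / 2) ^ w.length) ×ˢ
    Set.Ico (sqCorner w).2 ((sqCorner w).2 + (1 / 2) ^ w.length)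

lemma quadOffset_bounds (a : Fin 4) :
    0 ≤ (quadOffset a).1 ∧ (quadOffset a).1 ≤ 1/2 ∧ 0 ≤ (quadOffset a).2 ∧ (quadOffset a).2 ≤ 1/2 := by
  fin_cases a <;> simp [quadOffset] <;> norm_num

lemma sqCorner_bounds (w : List (Fin 4)) :
    0 ≤ (sqCorner w).1 ∧ (sqCorner w).1 + (1/2 : ℝ) ^ w.length ≤ 1 ∧
    0 ≤ (sqCorner w).2 ∧ (sqCorner w).2 + (1/2 : ℝ) ^ w.length ≤ 1 := by
  induction w with
  | nil => simp [sqCorner]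
  | cons a w ih =>
    obtain ⟨h1, h2, h3, h4⟩ := ih
    obtain ⟨q1, q2, q3, q4⟩ := quadOffset_bounds a
    simp only [sqCorner, List.length_cons, pow_succ]
    constructor
    · positivity
    refine ⟨by nlinarith [pow_pos (by norm_num : (0:ℝ) < 1/2) w.length], by positivity, ?_⟩
    nlinarith [pow_pos (by norm_num : (0:ℝ) < 1/2) w.length]

lemma ioSq_subset_quad (a : Fin 4) (w : List (Fin 4)) :
    ioSq (a :: w) ⊆ Set.Ico (quadOffset a).1 ((quadOffset a).1 + 1/2) ×ˢ
      Set.Ico (quadOffset a).2 ((quadOffset a).2 + 1/2) := by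
  obtain ⟨h1, h2, h3, h4⟩ := sqCorner_bounds w
  rintro ⟨x, y⟩ ⟨⟨hx1, hx2⟩, ⟨hy1, hy2⟩⟩
  simp only [sqCorner, List.length_cons, pow_succ] at *
  constructor <;> constructor <;> simp only [Set.mem_Ico] at * <;> nlinarith

lemma ioSq_cons_mem (a : Fin 4) (w : List (Fin 4)) (x : ℝ × ℝ) :
    x ∈ ioSq (a :: w) ↔
      (2 * (x.1 - (quadOffset a).1), 2 * (x.2 - (quadOffset a).2)) ∈ ioSq w := by
  simp only [ioSq, sqCorner, List.length_cons, pow_succ, Set.mem_prod, Set.mem_Ico]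
  constructor <;> rintro ⟨⟨u1, u2⟩, ⟨v1, v2⟩⟩ <;> refine ⟨⟨?_, ?_⟩, ⟨?_, ?_⟩⟩ <;> linarith

lemma ioSq_disjoint : ∀ (w w' : List (Fin 4)), w.length = w'.length → w ≠ w' →
    Disjoint (ioSq w) (ioSq w') := by
  intro w
  induction w with
  | nil => intro w' h hne; cases w' with
    | nil => exact absurd rfl hne
    | cons b v => simp at h
  | cons a u ih =>
    intro w' h hne
    cases w' with
    | nil => simp at h
    | cons b v =>
      simp only [List.length_cons, add_left_inj] at h
      by_cases hab : a = b
      · subst hab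
        have huv : u ≠ v := by rintro rfl; exact hne rfl
        have hd := ih v h huv
        rw [Set.disjoint_left]
        intro x hx hx'
        rw [ioSq_cons_mem] at hx hx'
        exact Set.disjoint_left.mp hd hx hx'
      · refine Set.disjoint_of_subset (ioSq_subset_quad a u) (ioSq_subset_quad b v) ?_
        fin_cases a <;> fin_cases b <;> simp_all [quadOffset]

/-! #### Combinatorics of `survives` -/

lemma survives_nil (ω : List (Fin 4) → Fin 4) : survives ω [] := by
  rintro u a ⟨t, ht⟩
  simp at ht

lemma survives_cons (ω : List (Fin 4) → Fin 4) (a : Fin 4) (v : List (Fin 4)) :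
    survives ω (a :: v) ↔ a ≠ ω [] ∧ survives (fun u => ω (a :: u)) v := by
  constructor
  · intro h
    refine ⟨h [] a ⟨v, rfl⟩, fun u b hub => h (a :: u) b ?_⟩
    obtain ⟨t, ht⟩ := hub
    exact ⟨t, by simp [← ht]⟩
  · rintro ⟨h0, h1⟩ u b hub
    match u with
    | [] =>
      obtain ⟨t, ht⟩ := hub
      simp at ht
      rw [ht.1]; exact h0
    | c :: u' =>
      obtain ⟨t, ht⟩ := hub
      simp at ht
      obtain ⟨rfl, ht2⟩ := ht
      exact h1 u' b ⟨t, by simpa using ht2⟩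

lemma survives_iff_forall_take (ω : List (Fin 4) → Fin 4) (w : List (Fin 4)) :
    survives ω w ↔ ∀ k, (hk : k < w.length) → w.get ⟨k, hk⟩ ≠ ω (w.take k) := by
  constructor
  · intro h k hk
    refine h (w.take k) _ ?_
    have : w.take k ++ [w.get ⟨k, hk⟩] = w.take (k+1) := by
      rw [List.take_succ]
      simp [List.getElem?_eq_getElem hk, List.get_eq_getElem]
    rw [this]
    exact List.take_prefix _ _
  · intro h u a hua
    have hu : u <+: w := (List.prefix_append u [a]).trans hua
    have hlen : u.length < w.length := by
      have := hua.length_le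
      simp at this; omega
    have hux : u = w.take u.length := List.prefix_iff_eq_take.mp hu
    have ha : a = w.get ⟨u.length, hlen⟩ := by
      have h1 : (u ++ [a])[u.length] = a := by simp
      have h2 := hua.getElem (show u.length < (u ++ [a]).length by simp)
      rw [h1] at h2
      simp [List.get_eq_getElem, h2]
    have hh := h u.length hlen
    rw [← hux] at hh
    rw [ha]
    exact hh

lemma survCount (n : ℕ) : ∀ ω : List (Fin 4) → Fin 4,
    Fintype.card {φ : Fin n → Fin 4 // survives ω (List.ofFn φ)} = 3 ^ n := by
  induction n with
  | zero =>
    intro ω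
    simp only [pow_zero]
    rw [Fintype.card_eq_one_iff]
    refine ⟨⟨Fin.elim0, by simpa using survives_nil ω⟩, ?_⟩
    rintro ⟨φ, hφ⟩
    ext i; exact absurd i.2 (by simp)
  | succ n ih =>
    intro ω
    have e : {φ : Fin (n+1) → Fin 4 // survives ω (List.ofFn φ)} ≃
        Σ a : Fin 4, {ψ : Fin n → Fin 4 //
          a ≠ ω [] ∧ survives (fun u => ω (a :: u)) (List.ofFn ψ)} := by
      refine (Equiv.subtypeEquiv ((Fin.consEquiv (fun _ => Fin 4)).symm) ?_).trans
        (Equiv.subtypeProdEquivSigmaSubtype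
          (fun a ψ => a ≠ ω [] ∧ survives (fun u => ω (a :: u)) (List.ofFn ψ)))
      intro φ
      rw [List.ofFn_succ, survives_cons]
      rfl
    rw [Fintype.card_congr e, Fintype.card_sigma]
    have hterm : ∀ a : Fin 4,
        Fintype.card {ψ : Fin n → Fin 4 //
          a ≠ ω [] ∧ survives (fun u => ω (a :: u)) (List.ofFn ψ)} =
        if a = ω [] then 0 else 3 ^ n := by
      intro a
      by_cases ha : a = ω []
      · rw [if_pos ha, Fintype.card_eq_zero_iff]
        exact ⟨fun ⟨ψ, hψ⟩ => hψ.1 ha⟩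
      · simp only [ha, if_false]
        rw [Fintype.card_congr (Equiv.subtypeEquivRight (fun ψ => and_iff_right ha))]
        exact ih _
    simp_rw [hterm]
    rw [Finset.sum_ite, Finset.sum_const, Finset.sum_const]
    have h1 : (Finset.univ.filter (fun a : Fin 4 => a = ω [])).card = 1 := by
      simp [Finset.filter_eq']
    have h2 : (Finset.univ.filter (fun a : Fin 4 => ¬ a = ω [])).card = 3 := by
      have := Finset.card_filter_add_card_filter_not
        (s := (Finset.univ : Finset (Fin 4))) (p := fun a => a = ω [])
      simp only [Finset.card_univ, Fintype.card_fin] at this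
      omega
    rw [h1, h2]
    ring

/-! #### Measure of the generation sets -/

lemma ioSq_measurable (w : List (Fin 4)) : MeasurableSet (ioSq w) :=
  measurableSet_Ico.prod measurableSet_Ico

lemma dyadicSquare_measurable (w : List (Fin 4)) : MeasurableSet (dyadicSquare w) :=
  measurableSet_Icc.prod measurableSet_Icc

lemma dyadicSquare_ae_eq (w : List (Fin 4)) :
    (dyadicSquare w : Set (ℝ × ℝ)) =ᵐ[volume] ioSq w := by
  rw [dyadicSquare, ioSq, MeasureTheory.Measure.volume_eq_prod]
  exact MeasureTheory.Measure.set_prod_ae_eq Ico_ae_eq_Icc.symm Ico_ae_eq_Icc.symm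

lemma ioSq_volume (w : List (Fin 4)) :
    volume (ioSq w) = (4 : ℝ≥0∞)⁻¹ ^ w.length := by
  rw [ioSq, MeasureTheory.Measure.volume_eq_prod, MeasureTheory.Measure.prod_prod,
    Real.volume_Ico, Real.volume_Ico, add_sub_cancel_left, add_sub_cancel_left]
  rw [ENNReal.ofReal_pow (by norm_num)]
  rw [show ENNReal.ofReal (1/2 : ℝ) = (2 : ℝ≥0∞)⁻¹ by
    rw [one_div, ENNReal.ofReal_inv_of_pos (by norm_num)]
    norm_num]
  rw [← mul_pow]
  congr 1
  rw [← ENNReal.mul_inv (by norm_num) (by norm_num)]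
  norm_num

/-- The finset of surviving words of generation `n` (as functions `Fin n → Fin 4`). -/
def survFinset (ω : List (Fin 4) → Fin 4) (n : ℕ) : Finset (Fin n → Fin 4) :=
  Finset.univ.filter (fun φ => survives ω (List.ofFn φ))

lemma survFinset_card (ω : List (Fin 4) → Fin 4) (n : ℕ) :
    (survFinset ω n).card = 3 ^ n := by
  rw [survFinset, ← Fintype.card_subtype]
  exact survCount n ω

lemma genSet_eq (ω : List (Fin 4) → Fin 4) (n : ℕ) :
    genSet ω n = ⋃ φ ∈ survFinset ω n, dyadicSquare (List.ofFn φ) := by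
  ext x
  simp only [genSet, Set.mem_iUnion, Set.mem_setOf_eq, survFinset, Finset.mem_filter,
    Finset.mem_coe, Finset.mem_univ, true_and, exists_prop]
  constructor
  · rintro ⟨w, ⟨hlen, hsurv⟩, hx⟩
    subst hlen
    exact ⟨w.get, by rwa [List.ofFn_get], by rwa [List.ofFn_get]⟩
  · rintro ⟨φ, hφ, hx⟩
    exact ⟨List.ofFn φ, ⟨by simp, hφ⟩, hx⟩

lemma vol_inter_genSet (ω : List (Fin 4) → Fin 4) (n : ℕ) {U : Set (ℝ × ℝ)}
    (hU : MeasurableSet U) :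
    volume (U ∩ genSet ω n) = ∑ φ ∈ survFinset ω n, volume (U ∩ ioSq (List.ofFn φ)) := by
  rw [genSet_eq, Set.inter_iUnion₂]
  have hae : (⋃ φ ∈ survFinset ω n, U ∩ dyadicSquare (List.ofFn φ)) =ᵐ[volume]
      (⋃ φ ∈ survFinset ω n, U ∩ ioSq (List.ofFn φ)) := by
    exact EventuallyEq.countable_bUnion (Finset.countable_toSet _)
      (fun φ _ => EventuallyEq.inter (by rfl) (dyadicSquare_ae_eq _))
  rw [measure_congr hae]
  exact measure_biUnion_finset
    (fun φ _ ψ _ hne => Set.disjoint_left.mpr (fun x hx hx' =>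
      Set.disjoint_left.mp
        (ioSq_disjoint _ _ (by simp) (fun h => hne (List.ofFn_injective h)))
        hx.2 hx'.2))
    (fun φ _ => hU.inter (ioSq_measurable _))

lemma sum_univ_vol_le (n : ℕ) {U : Set (ℝ × ℝ)} (hU : MeasurableSet U) :
    ∑ φ : Fin n → Fin 4, volume (U ∩ ioSq (List.ofFn φ)) ≤ volume U := by
  rw [← measure_biUnion_finset
    (fun φ _ ψ _ hne => Set.disjoint_left.mpr (fun x hx hx' =>
      Set.disjoint_left.mp
        (ioSq_disjoint _ _ (by simp) (fun h => hne (List.ofFn_injective h)))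
        hx.2 hx'.2))
    (fun φ _ => hU.inter (ioSq_measurable _))]
  exact measure_mono (by simp only [Set.iUnion_subset_iff]; intro φ _; exact Set.inter_subset_left)

lemma vol_genSet (ω : List (Fin 4) → Fin 4) (n : ℕ) :
    volume (genSet ω n) = 3 ^ n * (4 : ℝ≥0∞)⁻¹ ^ n := by
  have h := vol_inter_genSet ω n (MeasurableSet.univ)
  rw [Set.univ_inter] at h
  rw [h]
  have h2 : ∀ φ ∈ survFinset ω n,
      volume (Set.univ ∩ ioSq (List.ofFn φ)) = (4 : ℝ≥0∞)⁻¹ ^ n := by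
    intro φ _
    rw [Set.univ_inter, ioSq_volume]
    simp
  rw [Finset.sum_congr rfl h2, Finset.sum_const, survFinset_card, nsmul_eq_mul]
  norm_num

lemma approx_isProbability (ω : List (Fin 4) → Fin 4) (n : ℕ) :
    IsProbabilityMeasure (approxMeasure ω n) := by
  constructor
  rw [approxMeasure, Measure.smul_apply, Measure.restrict_apply_univ, smul_eq_mul,
    vol_genSet ω n]
  have h34 : (4/3 : ℝ≥0∞) * (3 * 4⁻¹) = 1 := by
    rw [div_eq_mul_inv]
    rw [show (4 : ℝ≥0∞) * 3⁻¹ * (3 * 4⁻¹) = (4 * 4⁻¹) * (3⁻¹ * 3) by ring]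
    rw [ENNReal.mul_inv_cancel (by norm_num) (by norm_num),
      ENNReal.inv_mul_cancel (by norm_num) (by norm_num), mul_one]
  rw [← mul_pow, ← mul_pow, h34, one_pow]

lemma approx_apply (ω : List (Fin 4) → Fin 4) (n : ℕ) {U : Set (ℝ × ℝ)}
    (hU : MeasurableSet U) :
    approxMeasure ω n U = (4/3 : ℝ≥0∞) ^ n *
      ∑ φ : Fin n → Fin 4,
        (if survives ω (List.ofFn φ) then volume (U ∩ ioSq (List.ofFn φ)) else 0) := by
  rw [approxMeasure, Measure.smul_apply, Measure.restrict_apply hU, smul_eq_mul,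
    vol_inter_genSet ω n hU, survFinset, Finset.sum_filter]


/-! #### Probability of survival -/

section Probability

variable {Ω : Type*} [MeasurableSpace Ω] (P : Measure Ω) [IsProbabilityMeasure P]
    (D : Ω → List (Fin 4) → Fin 4)

lemma surv_event_eq (w : List (Fin 4)) :
    {ω | survives (D ω) w} =
      ⋂ u ∈ (Finset.range w.length).image (w.take ·),
        (fun ω => D ω u) ⁻¹' {w.getD u.length 0}ᶜ := by
  ext ω
  simp only [Set.mem_setOf_eq, Set.mem_iInter, Finset.mem_image, Finset.mem_range,
    Set.mem_preimage, Set.mem_compl_iff, Set.mem_singleton_iff,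
    survives_iff_forall_take]
  constructor
  · rintro h u ⟨k, hk, rfl⟩
    have hlen : (w.take k).length = k := by simp [List.length_take]; omega
    rw [hlen]
    have := h k hk
    intro hc
    exact this (by rw [List.getD_eq_getElem _ _ hk] at hc; simpa [List.get_eq_getElem] using hc.symm ▸ rfl)
  · intro h k hk
    have := h (w.take k) ⟨k, hk, rfl⟩
    have hlen : (w.take k).length = k := by simp [List.length_take]; omega
    rw [hlen] at this
    intro hc
    exact this (by rw [List.getD_eq_getElem _ _ hk]; simpa [List.get_eq_getElem] using hc.symm)

lemma surv_event_measurable (hmeas : ∀ w, Measurable fun ω => D ω w) (w : List (Fin 4)) :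
    MeasurableSet {ω | survives (D ω) w} := by
  rw [surv_event_eq D w]
  exact Finset.measurableSet_biInter _ (fun u _ =>
    (hmeas u) (by trivial : MeasurableSet ({w.getD u.length 0}ᶜ)))

lemma surv_prob (hmeas : ∀ w, Measurable fun ω => D ω w)
    (hunif : ∀ w a, P {ω | D ω w = a} = 1 / 4)
    (hindep : ProbabilityTheory.iIndepFun (m := fun _ => ⊤) (fun w ω => D ω w) P) (w : List (Fin 4)) :
    P {ω | survives (D ω) w} = (3/4 : ℝ≥0∞) ^ w.length := by
  rw [surv_event_eq D w]
  have key := hindep.measure_inter_preimage_eq_mul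
    ((Finset.range w.length).image (w.take ·))
    (sets := fun u => ({w.getD u.length 0}ᶜ : Set (Fin 4)))
    (fun u _ => trivial)
  rw [key]
  have hterm : ∀ u : List (Fin 4), P ((fun ω => D ω u) ⁻¹' {w.getD u.length 0}ᶜ) = 3/4 := by
    intro u
    have h0 : (fun ω => D ω u) ⁻¹' {w.getD u.length 0}ᶜ = {ω | D ω u = w.getD u.length 0}ᶜ := by
      ext ω; simp
    have hms : MeasurableSet {ω | D ω u = w.getD u.length 0} :=
      (hmeas u) (measurableSet_singleton _)
    rw [h0, measure_compl hms (measure_ne_top _ _)]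
    have h4 : P {ω | D ω u = w.getD u.length 0} = 1/4 := hunif u _
    rw [measure_univ, h4]
    have h44 : (4 : ℝ≥0∞) / 4 = 1 :=
      ENNReal.div_self (by norm_num) (by norm_num)
    refine ENNReal.sub_eq_of_eq_add (by norm_num) ?_
    rw [ENNReal.div_add_div_same]
    norm_num [h44]
  rw [Finset.prod_congr rfl (fun u _ => hterm u), Finset.prod_const]
  congr 1
  rw [Finset.card_image_of_injOn, Finset.card_range]
  intro i hi j hj hij
  simp only [Finset.mem_coe, Finset.mem_range] at hi hj
  have hlen := congrArg List.length hij
  simpa [List.length_take, Nat.min_eq_left hi.le, Nat.min_eq_left hj.le] using hlen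

end Probability

end RandomCantorAux

open RandomCantorAux in
theorem random_cantor_natural_measure_null
    {Ω : Type*} [MeasurableSpace Ω] (P : Measure Ω) [IsProbabilityMeasure P]
    (D : Ω → List (Fin 4) → Fin 4)
    (hmeas : ∀ w, Measurable fun ω => D ω w)
    (hunif : ∀ w a, P {ω | D ω w = a} = 1 / 4)
    (hindep : ProbabilityTheory.iIndepFun (m := fun _ => ⊤) (fun w ω => D ω w) P)
    (μ : Ω → Measure (ℝ × ℝ))
    (hweak : ∀ ω, ∀ g : (ℝ × ℝ) →ᵇ ℝ,
      Tendsto (fun n => ∫ x, g x ∂(approxMeasure (D ω) n)) atTop (nhds (∫ x, g x ∂(μ ω))))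
    (F : Set (ℝ × ℝ)) (hF : F ⊆ Set.Icc (0 : ℝ) 1 ×ˢ Set.Icc (0 : ℝ) 1)
    (hFnull : volume F = 0) :
    ∀ᵐ ω ∂P, μ ω F = 0 := by
  classical
  have hsurvmeas : ∀ w : List (Fin 4), MeasurableSet {ω | survives (D ω) w} :=
    surv_event_measurable D hmeas
  -- each approximating measure is a probability measure
  haveI happrox : ∀ (ω' : List (Fin 4) → Fin 4) (n : ℕ),
      IsProbabilityMeasure (approxMeasure ω' n) := approx_isProbability
  -- the limit measures are probability measures
  have hμprob : ∀ ω, IsProbabilityMeasure (μ ω) := by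
    intro ω
    have h1 := hweak ω (BoundedContinuousFunction.const _ (1:ℝ))
    have heq : (fun n => ∫ x, (BoundedContinuousFunction.const (ℝ × ℝ) (1:ℝ)) x
        ∂(approxMeasure (D ω) n)) = fun _ => (1:ℝ) := by
      funext n
      haveI := happrox (D ω) n
      simp
    rw [heq] at h1
    have h2 : ∫ x, (BoundedContinuousFunction.const (ℝ × ℝ) (1:ℝ)) x ∂(μ ω) = 1 :=
      tendsto_nhds_unique h1 tendsto_const_nhds
    simp only [BoundedContinuousFunction.const_apply, integral_const, smul_eq_mul,
      mul_one] at h2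
    exact ⟨(ENNReal.toReal_eq_one_iff _).mp h2⟩
  -- portmanteau : for open sets the limit measure is at most the liminf
  have hport : ∀ ω {U : Set (ℝ × ℝ)}, IsOpen U →
      μ ω U ≤ atTop.liminf (fun n => approxMeasure (D ω) n U) := by
    intro ω U hU
    haveI := hμprob ω
    let ν : ℕ → ProbabilityMeasure (ℝ × ℝ) := fun n => ⟨approxMeasure (D ω) n, happrox _ n⟩
    let νl : ProbabilityMeasure (ℝ × ℝ) := ⟨μ ω, hμprob ω⟩
    have hten : Tendsto ν atTop (nhds νl) :=
      (ProbabilityMeasure.tendsto_iff_forall_integral_tendsto (μs := ν) (μ := νl)).mpr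
        (fun g => hweak ω g)
    exact ProbabilityMeasure.le_liminf_measure_open_of_tendsto hten hU
  -- measurability of the random approximate masses
  have hgmeas : ∀ (n : ℕ) {U : Set (ℝ × ℝ)}, MeasurableSet U →
      Measurable (fun ω' => approxMeasure (D ω') n U) := by
    intro n U hU
    have heq : (fun ω' => approxMeasure (D ω') n U) = fun ω' =>
        (4/3 : ℝ≥0∞) ^ n * ∑ φ : Fin n → Fin 4,
          (if survives (D ω') (List.ofFn φ) then volume (U ∩ ioSq (List.ofFn φ)) else 0) := by
      funext ω'
      exact approx_apply (D ω') n hU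
    rw [heq]
    refine Measurable.const_mul ?_ _
    refine Finset.measurable_sum _ (fun φ _ => ?_)
    exact Measurable.ite (hsurvmeas (List.ofFn φ)) measurable_const measurable_const
  -- expectation bound : E[μ_n(U)] ≤ vol(U)
  have hexp : ∀ (n : ℕ) {U : Set (ℝ × ℝ)}, MeasurableSet U →
      ∫⁻ ω', approxMeasure (D ω') n U ∂P ≤ volume U := by
    intro n U hU
    have heq : (fun ω' => approxMeasure (D ω') n U) = fun ω' =>
        (4/3 : ℝ≥0∞) ^ n * ∑ φ : Fin n → Fin 4,
          (if survives (D ω') (List.ofFn φ) then volume (U ∩ ioSq (List.ofFn φ)) else 0) := by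
      funext ω'
      exact approx_apply (D ω') n hU
    rw [heq]
    rw [lintegral_const_mul _ (Finset.measurable_sum _ (fun φ _ =>
      Measurable.ite (hsurvmeas (List.ofFn φ)) measurable_const measurable_const))]
    rw [lintegral_finset_sum _ (fun φ _ =>
      Measurable.ite (hsurvmeas (List.ofFn φ)) measurable_const measurable_const)]
    have hterm : ∀ φ : Fin n → Fin 4,
        ∫⁻ ω', (if survives (D ω') (List.ofFn φ) then volume (U ∩ ioSq (List.ofFn φ)) else 0) ∂P
          = (3/4 : ℝ≥0∞) ^ n * volume (U ∩ ioSq (List.ofFn φ)) := by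
      intro φ
      have hind : (fun ω' => (if survives (D ω') (List.ofFn φ)
            then volume (U ∩ ioSq (List.ofFn φ)) else 0)) =
          Set.indicator {ω' | survives (D ω') (List.ofFn φ)}
            (fun _ => volume (U ∩ ioSq (List.ofFn φ))) := by
        funext ω'
        rw [Set.indicator_apply]
        rfl
      rw [hind, lintegral_indicator_const (hsurvmeas (List.ofFn φ))]
      rw [surv_prob P D hmeas hunif hindep (List.ofFn φ), List.length_ofFn, mul_comm]
    rw [Finset.sum_congr rfl (fun φ _ => hterm φ), ← Finset.mul_sum]
    rw [← mul_assoc, ← mul_pow]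
    have h34 : (4/3 : ℝ≥0∞) * (3/4) = 1 := by
      rw [div_eq_mul_inv, div_eq_mul_inv]
      rw [show (4 : ℝ≥0∞) * 3⁻¹ * (3 * 4⁻¹) = (4 * 4⁻¹) * (3⁻¹ * 3) by ring]
      rw [ENNReal.mul_inv_cancel (by norm_num) (by norm_num),
        ENNReal.inv_mul_cancel (by norm_num) (by norm_num), mul_one]
    rw [h34, one_pow, one_mul]
    exact sum_univ_vol_le n hU
  -- choose a shrinking family of open supersets of F
  have hUs : ∀ k : ℕ, ∃ U, U ⊇ F ∧ IsOpen U ∧ volume U < (2 : ℝ≥0∞)⁻¹ ^ k := by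
    intro k
    refine Set.exists_isOpen_lt_of_lt F _ ?_
    rw [hFnull]
    exact ENNReal.pow_pos (by norm_num) k
  choose Us hUsub hUopen hUvol using hUs
  -- the liminf masses of the open sets
  set G : ℕ → Ω → ℝ≥0∞ :=
    fun k ω' => atTop.liminf (fun n => approxMeasure (D ω') n (Us k)) with hG
  have hGmeas : ∀ k, Measurable (G k) :=
    fun k => Measurable.liminf (fun n => hgmeas n (hUopen k).measurableSet)
  have hGint : ∀ k, ∫⁻ ω', G k ω' ∂P ≤ (2 : ℝ≥0∞)⁻¹ ^ k := by
    intro k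
    refine le_trans (lintegral_liminf_le (fun n => hgmeas n (hUopen k).measurableSet)) ?_
    refine le_trans (liminf_le_liminf (Filter.Eventually.of_forall
      (fun n => (hexp n (hUopen k).measurableSet).trans (hUvol k).le))) ?_
    simp
  -- the infimum over k has zero expectation
  have hinfmeas : Measurable fun ω' => ⨅ k, G k ω' := Measurable.iInf hGmeas
  have hint0 : ∫⁻ ω', ⨅ k, G k ω' ∂P = 0 := by
    refine le_antisymm ?_ zero_le
    have hle : ∀ k, ∫⁻ ω', ⨅ j, G j ω' ∂P ≤ (2 : ℝ≥0∞)⁻¹ ^ k :=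
      fun k => le_trans (lintegral_mono (fun ω' => iInf_le _ k)) (hGint k)
    have htend : Tendsto (fun k => (2 : ℝ≥0∞)⁻¹ ^ k) atTop (nhds 0) :=
      ENNReal.tendsto_pow_atTop_nhds_zero_of_lt_one
        (by rw [ENNReal.inv_lt_one]; norm_num)
    exact ge_of_tendsto' htend hle
  have hae := (lintegral_eq_zero_iff hinfmeas).mp hint0
  filter_upwards [hae] with ω' h0
  have hle : μ ω' F ≤ ⨅ k, G k ω' :=
    le_iInf (fun k => le_trans (measure_mono (hUsub k)) (hport ω' (hUopen k)))
  rw [h0] at hle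
  exact le_antisymm hle zero_le

end
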